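/- If λ₁ < 0 and λ₂ < 0 (both players spiteful) and the material payoffs satisfy m₁₁ − c₁ < m₂₁ and n₁₁ − c₂ < n₁₂ with n₁₂, m₂₁ ≥ 0 and c₁, c₂ > 0, then nF is a strictly dominant strategy for both players, so (nF,nF) is the unique Nash equilibrium of the psychological forwarding game. -/
import Mathlib


inductive FAct | F | nF
deriving DecidableEq

open FAct

/-- Material payoff of player 1 in the forwarding game. -/
def r1 (m11 m21 c1 : ℝ) : FAct → FAct → ℝ
  | F, F => m11 - c1
  | F, nF => -c1
  | nF, F => m21
  | nF, nF => 0

/-- Material payoff of player 2 in the forwarding game. -/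
def r2 (n11 n12 c2 : ℝ) : FAct → FAct → ℝ
  | F, F => n11 - c2
  | F, nF => n12
  | nF, F => -c2
  | nF, nF => 0

/-- Empathic payoff of player 1: own material payoff plus `λ₁` times the other's. -/
def v1 (m11 m21 n11 n12 c1 c2 lam1 : ℝ) (a b : FAct) : ℝ :=
  r1 m11 m21 c1 a b + lam1 * r2 n11 n12 c2 a b

/-- Empathic payoff of player 2: own material payoff plus `λ₂` times the other's. -/
def v2 (m11 m21 n11 n12 c1 c2 lam2 : ℝ) (a b : FAct) : ℝ :=
  r2 n11 n12 c2 a b + lam2 * r1 m11 m21 c1 a b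

/-- Pure Nash equilibrium of the psychological forwarding game. -/
def isNash (m11 m21 n11 n12 c1 c2 lam1 lam2 : ℝ) (a b : FAct) : Prop :=
  (∀ a' : FAct, v1 m11 m21 n11 n12 c1 c2 lam1 a' b ≤ v1 m11 m21 n11 n12 c1 c2 lam1 a b) ∧
  (∀ b' : FAct, v2 m11 m21 n11 n12 c1 c2 lam2 a b' ≤ v2 m11 m21 n11 n12 c1 c2 lam2 a b)

theorem nFnF_unique_nash_of_spite (m11 m21 n11 n12 c1 c2 lam1 lam2 : ℝ)
    (hm11 : 0 ≤ m11) (hn11 : 0 ≤ n11) (hm21 : 0 ≤ m21) (hn12 : 0 ≤ n12)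
    (hc1 : 0 < c1) (hc2 : 0 < c2)
    (hl1 : lam1 < 0) (hl2 : lam2 < 0)
    (h1 : m11 - c1 < m21) (h2 : n11 - c2 < n12) :
    -- nF is a strictly dominant strategy for both players
    ((∀ b : FAct, v1 m11 m21 n11 n12 c1 c2 lam1 F b < v1 m11 m21 n11 n12 c1 c2 lam1 nF b) ∧
     (∀ a : FAct, v2 m11 m21 n11 n12 c1 c2 lam2 a F < v2 m11 m21 n11 n12 c1 c2 lam2 a nF)) ∧
    -- hence (nF,nF) is the unique pure Nash equilibrium
    isNash m11 m21 n11 n12 c1 c2 lam1 lam2 nF nF ∧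
    (∀ a b : FAct, isNash m11 m21 n11 n12 c1 c2 lam1 lam2 a b → a = nF ∧ b = nF) := by
  have hd1 : ∀ b : FAct, v1 m11 m21 n11 n12 c1 c2 lam1 F b < v1 m11 m21 n11 n12 c1 c2 lam1 nF b := by
    intro b
    cases b <;> simp [v1, r1, r2] <;> nlinarith [mul_nonpos_of_nonpos_of_nonneg hl1.le hn11, mul_nonpos_of_nonpos_of_nonneg hl1.le hn12]
  have hd2 : ∀ a : FAct, v2 m11 m21 n11 n12 c1 c2 lam2 a F < v2 m11 m21 n11 n12 c1 c2 lam2 a nF := by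
    intro a
    cases a <;> simp [v2, r1, r2] <;> nlinarith [mul_nonpos_of_nonpos_of_nonneg hl2.le hm11, mul_nonpos_of_nonpos_of_nonneg hl2.le hm21]
  refine ⟨⟨hd1, hd2⟩, ⟨?_, ?_⟩, ?_⟩
  · intro a'; cases a' <;> [exact (hd1 nF).le; exact le_refl _]
  · intro b'; cases b' <;> [exact (hd2 nF).le; exact le_refl _]
  · intro a b h
    constructor
    · cases a
      · exact absurd (h.1 nF) (not_le.mpr (hd1 b))
      · rfl
    · cases b
      · exact absurd (h.2 nF) (not_le.mpr (hd2 a))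
      · rfl
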